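/- Consider the PDS method under the saddle-point assumption with parameters s ∈ [1,2], ρ > 0, δ ∈ (0,1), step sizes α_k = γ_k/‖T⁽ᵏ⁾‖₂ with γ_k = (k+1)^{−1+δ/2}, and assume T⁽ᵏ⁾ ≠ 0 for all k and that the chosen subgradient selections g₀, g₁, …, g_m are bounded in norm on every bounded subset of ℝⁿ. Then there exists a constant C > 0 such that for every ε ∈ (0,1] and every natural number K with K ≥ C·ε^{−2s/δ}, the set I_ε(K) := {k ∈ {0,…,K} : ‖F(x⁽ᵏ⁾)‖₂ + ‖A x⁽ᵏ⁾ − b‖₂ ≤ ε} is nonempty and min_{k ∈ I_ε(K)} f₀(x⁽ᵏ⁾) ≤ p* + ε. -/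

import Mathlib

open scoped RealInnerProductSpace Classical
open Matrix

/-- `A x` for `A` an `l × n` real matrix and `x ∈ ℝⁿ`, as Euclidean spaces. -/
noncomputable def mulVecE {l n : ℕ} (A : Matrix (Fin l) (Fin n) ℝ)
    (x : EuclideanSpace ℝ (Fin n)) : EuclideanSpace ℝ (Fin l) :=
  Matrix.toEuclideanLin A x

/-- `F(x) = (max{f₁(x),0}, …, max{f_m(x),0})`. -/
noncomputable def Fplus {n m : ℕ} (f : Fin m → EuclideanSpace ℝ (Fin n) → ℝ)
    (x : EuclideanSpace ℝ (Fin n)) : EuclideanSpace ℝ (Fin m) :=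
  (WithLp.equiv 2 (Fin m → ℝ)).symm fun i => max (f i x) 0

/-- The Lagrangian `L(x, λ, ν) = f₀(x) + λᵀF(x) + νᵀ(Ax - b)`. -/
noncomputable def Lag {n m l : ℕ} (f0 : EuclideanSpace ℝ (Fin n) → ℝ)
    (f : Fin m → EuclideanSpace ℝ (Fin n) → ℝ)
    (A : Matrix (Fin l) (Fin n) ℝ) (b : EuclideanSpace ℝ (Fin l))
    (x : EuclideanSpace ℝ (Fin n)) (lam : EuclideanSpace ℝ (Fin m))
    (nu : EuclideanSpace ℝ (Fin l)) : ℝ :=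
  f0 x + ⟪lam, Fplus f x⟫ + ⟪nu, mulVecE A x - b⟫

set_option maxHeartbeats 1000000

lemma Fplus_apply {n m : ℕ} (f : Fin m → EuclideanSpace ℝ (Fin n) → ℝ)
    (x : EuclideanSpace ℝ (Fin n)) (i : Fin m) : Fplus f x i = max (f i x) 0 := rfl

lemma Fplus_nonneg {n m : ℕ} (f : Fin m → EuclideanSpace ℝ (Fin n) → ℝ)
    (x : EuclideanSpace ℝ (Fin n)) (i : Fin m) : 0 ≤ Fplus f x i := le_max_right _ _

lemma mulVecE_sub {l n : ℕ} (A : Matrix (Fin l) (Fin n) ℝ) (x y : EuclideanSpace ℝ (Fin n)) :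
    mulVecE A (x - y) = mulVecE A x - mulVecE A y := by
  simp [mulVecE, map_sub]

lemma inner_mulVecE_transpose {l n : ℕ} (A : Matrix (Fin l) (Fin n) ℝ)
    (w : EuclideanSpace ℝ (Fin l)) (v : EuclideanSpace ℝ (Fin n)) :
    ⟪mulVecE Aᵀ w, v⟫ = ⟪w, mulVecE A v⟫ := by
  have h : Aᵀ = Aᴴ := by
    ext i j; simp [Matrix.conjTranspose_apply]
  rw [mulVecE, mulVecE, h, Matrix.toEuclideanLin_conjTranspose_eq_adjoint]
  exact LinearMap.adjoint_inner_left _ _ _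

lemma exists_matrix_bound {l n : ℕ} (A : Matrix (Fin l) (Fin n) ℝ) :
    ∃ CA : ℝ, 0 ≤ CA ∧ ∀ x, ‖mulVecE A x‖ ≤ CA * ‖x‖ := by
  let L := LinearMap.toContinuousLinearMap (Matrix.toEuclideanLin A)
  exact ⟨‖L‖, norm_nonneg _, fun x => L.le_opNorm x⟩

lemma euclid_inner_eq {N : ℕ} (x y : EuclideanSpace ℝ (Fin N)) :
    ⟪x, y⟫ = ∑ i, x i * y i := by
  simp [PiLp.inner_apply, RCLike.inner_apply, conj_trivial, mul_comm]

lemma euclid_coord_le_norm {N : ℕ} (x : EuclideanSpace ℝ (Fin N)) (i : Fin N) :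
    |x i| ≤ ‖x‖ := by
  rw [EuclideanSpace.norm_eq]
  have h1 : |x i| = Real.sqrt (‖x i‖ ^ 2) := by
    rw [Real.sqrt_sq_eq_abs, abs_norm, Real.norm_eq_abs]
  rw [h1]
  apply Real.sqrt_le_sqrt
  exact Finset.single_le_sum (f := fun j => ‖x j‖ ^ 2) (fun j _ => sq_nonneg _) (Finset.mem_univ i)

lemma euclid_norm_le_of_coord {N : ℕ} (x : EuclideanSpace ℝ (Fin N)) (c : ℝ) (hc : 0 ≤ c)
    (h : ∀ i, |x i| ≤ c) : ‖x‖ ≤ Real.sqrt N * c := by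
  rw [EuclideanSpace.norm_eq]
  have h1 : ∑ i, ‖x i‖ ^ 2 ≤ (N : ℝ) * c ^ 2 := by
    calc ∑ i, ‖x i‖ ^ 2 ≤ ∑ _i : Fin N, c ^ 2 := by
          apply Finset.sum_le_sum
          intro i _
          rw [Real.norm_eq_abs]
          exact pow_le_pow_left₀ (abs_nonneg _) (h i) 2
      _ = (N : ℝ) * c ^ 2 := by simp [mul_comm]
  calc Real.sqrt (∑ i, ‖x i‖ ^ 2) ≤ Real.sqrt ((N:ℝ) * c ^ 2) := Real.sqrt_le_sqrt h1
    _ = Real.sqrt N * c := by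
        rw [Real.sqrt_mul (Nat.cast_nonneg N), Real.sqrt_sq hc]

/-- PDS main theorem: `O(ε^(-2s\/δ))` complexity of the primal-dual subgradient method. -/
theorem pds_complexity
    (n m l : ℕ)
    (f0 : EuclideanSpace ℝ (Fin n) → ℝ)
    (f : Fin m → EuclideanSpace ℝ (Fin n) → ℝ)
    (hf0 : ConvexOn ℝ Set.univ f0)
    (hf : ∀ i, ConvexOn ℝ Set.univ (f i))
    (A : Matrix (Fin l) (Fin n) ℝ) (b : EuclideanSpace ℝ (Fin l))
    (pstar : ℝ)
    (xstar : EuclideanSpace ℝ (Fin n))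
    (lamstar : EuclideanSpace ℝ (Fin m)) (nustar : EuclideanSpace ℝ (Fin l))
    -- x* is primal optimal with value p*
    (hxfeas : ∀ i, f i xstar ≤ 0) (hxeq : mulVecE A xstar = b)
    (hxval : f0 xstar = pstar)
    -- saddle-point assumption
    (hlamstar : ∀ i, 0 ≤ lamstar i)
    (hsaddle_eq : Lag f0 f A b xstar lamstar nustar = pstar)
    (hsaddle1 : ∀ (lam : EuclideanSpace ℝ (Fin m)) (nu : EuclideanSpace ℝ (Fin l)),
      (∀ i, 0 ≤ lam i) → Lag f0 f A b xstar lam nu ≤ pstar)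
    (hsaddle2 : ∀ x, pstar ≤ Lag f0 f A b x lamstar nustar)
    -- parameters s ∈ [1,2], ρ > 0, δ ∈ (0,1)
    (s ρ δ : ℝ) (hs1 : 1 ≤ s) (hs2 : s ≤ 2) (hρ : 0 < ρ)
    (hδ0 : 0 < δ) (hδ1 : δ < 1)
    -- fixed subgradient selections g₀(x) ∈ ∂f₀(x), gᵢ(x) ∈ ∂Fᵢ(x),
    -- bounded in norm on every bounded subset of ℝⁿ
    (g0 : EuclideanSpace ℝ (Fin n) → EuclideanSpace ℝ (Fin n))
    (hg0 : ∀ x y, ⟪g0 x, y - x⟫ ≤ f0 y - f0 x)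
    (g : Fin m → EuclideanSpace ℝ (Fin n) → EuclideanSpace ℝ (Fin n))
    (hg : ∀ i x y, ⟪g i x, y - x⟫ ≤ max (f i y) 0 - max (f i x) 0)
    (hbdd : ∀ B : Set (EuclideanSpace ℝ (Fin n)), Bornology.IsBounded B →
      ∃ M : ℝ, ∀ x ∈ B, ‖g0 x‖ ≤ M ∧ ∀ i, ‖g i x‖ ≤ M)
    -- the PDS iterates z⁽ᵏ⁾ = (x⁽ᵏ⁾, λ⁽ᵏ⁾, ν⁽ᵏ⁾)
    (xk : ℕ → EuclideanSpace ℝ (Fin n))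
    (lamk : ℕ → EuclideanSpace ℝ (Fin m))
    (nuk : ℕ → EuclideanSpace ℝ (Fin l))
    (hlam0 : ∀ i, 0 ≤ lamk 0 i)
    -- the penalty terms ϱ⁽ᵏ⁾ and ς⁽ᵏ⁾
    (ϱ : ℕ → EuclideanSpace ℝ (Fin m))
    (hϱ : ∀ k, ϱ k = if Fplus f (xk k) ≠ 0 then
      (s * ‖Fplus f (xk k)‖ ^ (s - 2)) • Fplus f (xk k) else 0)
    (ς : ℕ → EuclideanSpace ℝ (Fin l))
    (hς : ∀ k, ς k = if mulVecE A (xk k) ≠ b then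
      (s * ‖mulVecE A (xk k) - b‖ ^ (s - 2)) • (mulVecE A (xk k) - b) else 0)
    -- T⁽ᵏ⁾: primal component Tx k and total Euclidean norm nT k
    (Tx : ℕ → EuclideanSpace ℝ (Fin n))
    (hTx : ∀ k, Tx k = g0 (xk k)
      + (∑ i, (lamk k i + ρ * ϱ k i) • g i (xk k))
      + mulVecE Aᵀ (nuk k + ρ • ς k))
    (nT : ℕ → ℝ)
    (hnT : ∀ k, nT k = Real.sqrt (‖Tx k‖ ^ 2 + ‖Fplus f (xk k)‖ ^ 2
      + ‖mulVecE A (xk k) - b‖ ^ 2))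
    -- T⁽ᵏ⁾ ≠ 0
    (hTne : ∀ k, ¬ (Tx k = 0 ∧ Fplus f (xk k) = 0 ∧ mulVecE A (xk k) - b = 0))
    -- step sizes αₖ = γₖ/‖T⁽ᵏ⁾‖₂ with γₖ = (k+1)^(-1+δ/2)
    (γ α : ℕ → ℝ)
    (hγ : ∀ k, γ k = ((k : ℝ) + 1) ^ (-1 + δ / 2))
    (hα : ∀ k, α k = γ k / nT k)
    -- the update z⁽ᵏ⁺¹⁾ = z⁽ᵏ⁾ - αₖ T⁽ᵏ⁾
    (hxk : ∀ k, xk (k + 1) = xk k - α k • Tx k)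
    (hlamk : ∀ k, lamk (k + 1) = lamk k + α k • Fplus f (xk k))
    (hnuk : ∀ k, nuk (k + 1) = nuk k + α k • (mulVecE A (xk k) - b))
    :
    ∃ C : ℝ, 0 < C ∧ ∀ ε : ℝ, 0 < ε → ε ≤ 1 → ∀ K : ℕ,
      C * ε ^ (-(2 * s) / δ) ≤ (K : ℝ) →
      ∃ k ≤ K, ‖Fplus f (xk k)‖ + ‖mulVecE A (xk k) - b‖ ≤ ε ∧
        f0 (xk k) ≤ pstar + ε := by
  classical
  have hs0 : (0:ℝ) < s := by linarith
  have hδne : δ ≠ 0 := ne_of_gt hδ0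
  -- T is nonzero
  have sq0 : ∀ a : ℝ, 0 ≤ a → a ^ 2 ≤ 0 → a = 0 := by intro a ha h2; nlinarith
  have hnT0 : ∀ k, 0 < nT k := by
    intro k
    rw [hnT k]
    apply Real.sqrt_pos.mpr
    by_contra h
    push_neg at h
    refine hTne k ⟨?_, ?_, ?_⟩
    · exact norm_eq_zero.mp (sq0 _ (norm_nonneg _) (by nlinarith [sq_nonneg ‖Fplus f (xk k)‖, sq_nonneg ‖mulVecE A (xk k) - b‖]))
    · exact norm_eq_zero.mp (sq0 _ (norm_nonneg _) (by nlinarith [sq_nonneg ‖Tx k‖, sq_nonneg ‖mulVecE A (xk k) - b‖]))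
    · exact norm_eq_zero.mp (sq0 _ (norm_nonneg _) (by nlinarith [sq_nonneg ‖Tx k‖, sq_nonneg ‖Fplus f (xk k)‖]))
  have hγpos : ∀ k, 0 < γ k := by
    intro k; rw [hγ k]; exact Real.rpow_pos_of_pos (by positivity) _
  have hαpos : ∀ k, 0 < α k := fun k => by rw [hα k]; exact div_pos (hγpos k) (hnT0 k)
  -- dual iterates stay nonnegative
  have hlamnn : ∀ k i, 0 ≤ lamk k i := by
    intro k
    induction k with
    | zero => exact hlam0
    | succ k ih =>
      intro i
      rw [hlamk k]
      have h1 : (lamk k + α k • Fplus f (xk k)) i = lamk k i + α k * Fplus f (xk k) i := rfl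
      rw [h1]
      exact add_nonneg (ih i) (mul_nonneg (hαpos k).le (Fplus_nonneg f _ i))
  -- penalty inner products
  have hϱF : ∀ k, ⟪ϱ k, Fplus f (xk k)⟫ = s * ‖Fplus f (xk k)‖ ^ s := by
    intro k; rw [hϱ k]
    by_cases hF : Fplus f (xk k) = 0
    · rw [if_neg (not_not_intro hF)]
      simp [hF, Real.zero_rpow (ne_of_gt hs0)]
    · rw [if_pos hF, real_inner_smul_left, real_inner_self_eq_norm_sq]
      have hn : (0:ℝ) < ‖Fplus f (xk k)‖ := norm_pos_iff.mpr hF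
      have h2 : ‖Fplus f (xk k)‖ ^ (s-2) * ‖Fplus f (xk k)‖ ^ (2:ℕ) = ‖Fplus f (xk k)‖ ^ s := by
        rw [← Real.rpow_natCast ‖Fplus f (xk k)‖ 2, ← Real.rpow_add hn]
        norm_num
      rw [mul_assoc, h2]
  have hςr : ∀ k, ⟪ς k, mulVecE A (xk k) - b⟫ = s * ‖mulVecE A (xk k) - b‖ ^ s := by
    intro k; rw [hς k]
    by_cases hr : mulVecE A (xk k) - b = 0
    · have hr' : mulVecE A (xk k) = b := sub_eq_zero.mp hr
      rw [if_neg (not_not_intro hr')]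
      simp [hr, Real.zero_rpow (ne_of_gt hs0)]
    · have hr' : mulVecE A (xk k) ≠ b := fun h => hr (by rw [h, sub_self])
      rw [if_pos hr', real_inner_smul_left, real_inner_self_eq_norm_sq]
      have hn : (0:ℝ) < ‖mulVecE A (xk k) - b‖ := norm_pos_iff.mpr hr
      have h2 : ‖mulVecE A (xk k) - b‖ ^ (s-2) * ‖mulVecE A (xk k) - b‖ ^ (2:ℕ) = ‖mulVecE A (xk k) - b‖ ^ s := by
        rw [← Real.rpow_natCast ‖mulVecE A (xk k) - b‖ 2, ← Real.rpow_add hn]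
        norm_num
      rw [mul_assoc, h2]
  have hϱnn : ∀ k i, 0 ≤ ϱ k i := by
    intro k i; rw [hϱ k]; split_ifs with h
    · have h1 : ((s * ‖Fplus f (xk k)‖ ^ (s-2)) • Fplus f (xk k)) i
          = (s * ‖Fplus f (xk k)‖ ^ (s-2)) * Fplus f (xk k) i := rfl
      rw [h1]
      exact mul_nonneg (mul_nonneg hs0.le (Real.rpow_nonneg (norm_nonneg _) _)) (Fplus_nonneg f _ i)
    · simp
  -- saddle point consequence
  have hsadk : ∀ x, 0 ≤ f0 x - pstar + ⟪lamstar, Fplus f x⟫ + ⟪nustar, mulVecE A x - b⟫ := by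
    intro x; have h := hsaddle2 x; simp only [Lag] at h; linarith
  -- the merit function
  set e : ℕ → ℝ := fun k => f0 (xk k) - pstar + ⟪lamstar, Fplus f (xk k)⟫
      + ⟪nustar, mulVecE A (xk k) - b⟫ + ρ * (s * ‖Fplus f (xk k)‖ ^ s)
      + ρ * (s * ‖mulVecE A (xk k) - b‖ ^ s) with hedef
  clear_value e
  have hrsnn : ∀ k, 0 ≤ ρ * (s * ‖Fplus f (xk k)‖ ^ s) ∧ 0 ≤ ρ * (s * ‖mulVecE A (xk k) - b‖ ^ s) := by
    intro k
    constructor <;>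
      exact mul_nonneg hρ.le (mul_nonneg hs0.le (Real.rpow_nonneg (norm_nonneg _) _))
  have hce : ∀ k, ρ * (s * ‖Fplus f (xk k)‖ ^ s) + ρ * (s * ‖mulVecE A (xk k) - b‖ ^ s) ≤ e k := by
    intro k; simp only [hedef]; linarith [hsadk (xk k)]
  have hennn : ∀ k, 0 ≤ e k := by
    intro k
    have h := hrsnn k
    linarith [hce k]
  -- the key inequality
  have hkey : ∀ k, e k ≤ ⟪Tx k, xk k - xstar⟫ - ⟪Fplus f (xk k), lamk k - lamstar⟫
      - ⟪mulVecE A (xk k) - b, nuk k - nustar⟫ := by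
    intro k
    have hg0' : f0 (xk k) - pstar ≤ ⟪g0 (xk k), xk k - xstar⟫ := by
      have h1 := hg0 (xk k) xstar
      rw [hxval] at h1
      have e1 : ⟪g0 (xk k), xstar - xk k⟫ = ⟪g0 (xk k), xstar⟫ - ⟪g0 (xk k), xk k⟫ :=
        inner_sub_right _ _ _
      have e2 : ⟪g0 (xk k), xk k - xstar⟫ = ⟪g0 (xk k), xk k⟫ - ⟪g0 (xk k), xstar⟫ :=
        inner_sub_right _ _ _
      linarith
    have hAT : ⟪mulVecE Aᵀ (nuk k + ρ • ς k), xk k - xstar⟫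
        = ⟪nuk k, mulVecE A (xk k) - b⟫ + ρ * (s * ‖mulVecE A (xk k) - b‖ ^ s) := by
      rw [inner_mulVecE_transpose, mulVecE_sub, hxeq, inner_add_left, real_inner_smul_left, hςr k]
    have hsum : ⟪lamk k, Fplus f (xk k)⟫ + ρ * (s * ‖Fplus f (xk k)‖ ^ s)
        ≤ ⟪∑ i, (lamk k i + ρ * ϱ k i) • g i (xk k), xk k - xstar⟫ := by
      rw [sum_inner]
      have hterm : ∀ i ∈ Finset.univ, (lamk k i + ρ * ϱ k i) * Fplus f (xk k) i
          ≤ ⟪(lamk k i + ρ * ϱ k i) • g i (xk k), xk k - xstar⟫ := by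
        intro i _
        rw [real_inner_smul_left]
        have hc : 0 ≤ lamk k i + ρ * ϱ k i :=
          add_nonneg (hlamnn k i) (mul_nonneg hρ.le (hϱnn k i))
        apply mul_le_mul_of_nonneg_left _ hc
        have h1 := hg i (xk k) xstar
        have hFstar : max (f i xstar) 0 = 0 := max_eq_right (hxfeas i)
        rw [hFstar] at h1
        have e1 : ⟪g i (xk k), xstar - xk k⟫ = ⟪g i (xk k), xstar⟫ - ⟪g i (xk k), xk k⟫ :=
          inner_sub_right _ _ _
        have e2 : ⟪g i (xk k), xk k - xstar⟫ = ⟪g i (xk k), xk k⟫ - ⟪g i (xk k), xstar⟫ :=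
          inner_sub_right _ _ _
        rw [Fplus_apply]
        linarith
      have heq : ⟪lamk k, Fplus f (xk k)⟫ + ρ * (s * ‖Fplus f (xk k)‖ ^ s)
          = ∑ i, (lamk k i + ρ * ϱ k i) * Fplus f (xk k) i := by
        have h2 : ∑ i, (lamk k i + ρ * ϱ k i) * Fplus f (xk k) i
            = (∑ i, lamk k i * Fplus f (xk k) i) + ρ * ∑ i, ϱ k i * Fplus f (xk k) i := by
          rw [Finset.mul_sum, ← Finset.sum_add_distrib]
          apply Finset.sum_congr rfl
          intro i _; ring
        rw [h2, ← euclid_inner_eq, ← euclid_inner_eq, hϱF k]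
      rw [heq]
      exact Finset.sum_le_sum hterm
    have hTsplit : ⟪Tx k, xk k - xstar⟫ = ⟪g0 (xk k), xk k - xstar⟫
        + ⟪∑ i, (lamk k i + ρ * ϱ k i) • g i (xk k), xk k - xstar⟫
        + ⟪mulVecE Aᵀ (nuk k + ρ • ς k), xk k - xstar⟫ := by
      rw [hTx k, inner_add_left, inner_add_left]
    have hd1 : ⟪Fplus f (xk k), lamk k - lamstar⟫
        = ⟪Fplus f (xk k), lamk k⟫ - ⟪Fplus f (xk k), lamstar⟫ := inner_sub_right _ _ _
    have hd2 : ⟪mulVecE A (xk k) - b, nuk k - nustar⟫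
        = ⟪mulVecE A (xk k) - b, nuk k⟫ - ⟪mulVecE A (xk k) - b, nustar⟫ := inner_sub_right _ _ _
    have hc1 : ⟪Fplus f (xk k), lamk k⟫ = ⟪lamk k, Fplus f (xk k)⟫ := real_inner_comm _ _
    have hc2 : ⟪Fplus f (xk k), lamstar⟫ = ⟪lamstar, Fplus f (xk k)⟫ := real_inner_comm _ _
    have hc3 : ⟪mulVecE A (xk k) - b, nuk k⟫ = ⟪nuk k, mulVecE A (xk k) - b⟫ := real_inner_comm _ _
    have hc4 : ⟪mulVecE A (xk k) - b, nustar⟫ = ⟪nustar, mulVecE A (xk k) - b⟫ := real_inner_comm _ _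
    simp only [hedef]
    linarith
  -- the descent recursion
  set V : ℕ → ℝ := fun k => ‖xk k - xstar‖ ^ 2 + ‖lamk k - lamstar‖ ^ 2 + ‖nuk k - nustar‖ ^ 2
    with hVdef
  clear_value V
  have hVnn : ∀ k, 0 ≤ V k := fun k => by simp only [hVdef]; positivity
  have hrec : ∀ k, V (k+1) = V k - 2 * α k * (⟪Tx k, xk k - xstar⟫
      - ⟪Fplus f (xk k), lamk k - lamstar⟫ - ⟪mulVecE A (xk k) - b, nuk k - nustar⟫)
      + γ k ^ 2 := by
    intro k
    have hx1 : xk (k+1) - xstar = (xk k - xstar) - α k • Tx k := by rw [hxk k]; abel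
    have hl1 : lamk (k+1) - lamstar = (lamk k - lamstar) + α k • Fplus f (xk k) := by
      rw [hlamk k]; abel
    have hn1 : nuk (k+1) - nustar = (nuk k - nustar) + α k • (mulVecE A (xk k) - b) := by
      rw [hnuk k]; abel
    have hγsq : α k ^ 2 * (‖Tx k‖ ^ 2 + ‖Fplus f (xk k)‖ ^ 2 + ‖mulVecE A (xk k) - b‖ ^ 2)
        = γ k ^ 2 := by
      have h1 : (nT k) ^ 2 = ‖Tx k‖ ^ 2 + ‖Fplus f (xk k)‖ ^ 2 + ‖mulVecE A (xk k) - b‖ ^ 2 := by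
        rw [hnT k]; exact Real.sq_sqrt (by positivity)
      rw [← h1, hα k]
      field_simp [(hnT0 k).ne']
    simp only [hVdef]
    rw [hx1, hl1, hn1, norm_sub_sq_real, norm_add_sq_real, norm_add_sq_real,
      real_inner_smul_right, real_inner_smul_right, real_inner_smul_right,
      real_inner_comm (xk k - xstar) (Tx k), real_inner_comm (lamk k - lamstar) (Fplus f (xk k)),
      real_inner_comm (nuk k - nustar) (mulVecE A (xk k) - b)]
    simp only [norm_smul, Real.norm_eq_abs, mul_pow, sq_abs]
    linear_combination hγsq
  have hrec2 : ∀ k, 2 * (α k * e k) ≤ (V k - V (k+1)) + γ k ^ 2 := by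
    intro k
    have h1 := hrec k
    have h2 := mul_le_mul_of_nonneg_left (hkey k) (hαpos k).le
    linarith
  have hVstep : ∀ k, V (k+1) ≤ V k + γ k ^ 2 := by
    intro k
    have h3 : 0 ≤ α k * e k := mul_nonneg (hαpos k).le (hennn k)
    linarith [hrec2 k]
  -- summability of the step sizes squared
  have hsummable : Summable (fun k : ℕ => γ k ^ 2) := by
    have heq : (fun k : ℕ => γ k ^ 2) = fun k : ℕ => ((k:ℝ)+1) ^ (-2+δ) := by
      funext k
      rw [hγ k, ← Real.rpow_natCast (((k:ℝ)+1) ^ (-1+δ/2)) 2,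
        ← Real.rpow_mul (by positivity), show ((2:ℕ):ℝ) = 2 from by norm_num,
        show (-1+δ/2) * (2:ℝ) = -2+δ from by ring]
    rw [heq]
    have h1 : Summable (fun k : ℕ => (k:ℝ) ^ (-2+δ)) :=
      (Real.summable_nat_rpow (p := -2+δ)).mpr (by linarith)
    have h2 := (summable_nat_add_iff 1).mpr h1
    convert h2 using 2 with k
    push_cast
    rfl
    norm_num
  set S : ℝ := ∑' k, γ k ^ 2 with hSdef
  clear_value S
  have hSpart : ∀ N, ∑ k ∈ Finset.range N, γ k ^ 2 ≤ S := by
    intro N; rw [hSdef]; exact Summable.sum_le_tsum _ (fun i _ => sq_nonneg _) hsummable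
  have hS1 : (1:ℝ) ≤ S := by
    have h0 : γ 0 ^ 2 = 1 := by rw [hγ 0]; norm_num
    calc (1:ℝ) = γ 0 ^ 2 := h0.symm
      _ ≤ S := by rw [hSdef]; exact Summable.le_tsum hsummable 0 (fun j _ => sq_nonneg _)
  set R2 : ℝ := V 0 + S with hR2def
  clear_value R2
  have hR2pos : 0 < R2 := by have := hVnn 0; simp only [hR2def]; linarith
  have hVb : ∀ k, V k ≤ R2 := by
    intro k
    have h1 : V k ≤ V 0 + ∑ j ∈ Finset.range k, γ j ^ 2 := by
      induction k with
      | zero => simp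
      | succ k ih => rw [Finset.sum_range_succ]; linarith [hVstep k]
    simp only [hR2def]
    linarith [hSpart k]
  set R : ℝ := Real.sqrt R2 with hRdef
  clear_value R
  have hR0 : 0 ≤ R := by rw [hRdef]; exact Real.sqrt_nonneg _
  have hsqle : ∀ t : ℝ, 0 ≤ t → t ^ 2 ≤ R2 → t ≤ R := by
    intro t ht h
    rw [hRdef]
    calc t = Real.sqrt (t ^ 2) := (Real.sqrt_sq ht).symm
      _ ≤ Real.sqrt R2 := Real.sqrt_le_sqrt h
  have hxR : ∀ k, ‖xk k - xstar‖ ≤ R := by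
    intro k
    apply hsqle _ (norm_nonneg _)
    have h := hVb k
    simp only [hVdef] at h
    linarith [sq_nonneg ‖lamk k - lamstar‖, sq_nonneg ‖nuk k - nustar‖]
  have hlamR : ∀ k, ‖lamk k - lamstar‖ ≤ R := by
    intro k
    apply hsqle _ (norm_nonneg _)
    have h := hVb k
    simp only [hVdef] at h
    linarith [sq_nonneg ‖xk k - xstar‖, sq_nonneg ‖nuk k - nustar‖]
  have hnuR : ∀ k, ‖nuk k - nustar‖ ≤ R := by
    intro k
    apply hsqle _ (norm_nonneg _)
    have h := hVb k
    simp only [hVdef] at h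
    linarith [sq_nonneg ‖xk k - xstar‖, sq_nonneg ‖lamk k - lamstar‖]
  have hxnorm : ∀ k, ‖xk k‖ ≤ ‖xstar‖ + R := by
    intro k; have := norm_sub_norm_le (xk k) xstar; linarith [hxR k]
  have hlamnorm : ∀ k, ‖lamk k‖ ≤ ‖lamstar‖ + R := by
    intro k; have := norm_sub_norm_le (lamk k) lamstar; linarith [hlamR k]
  have hnunorm : ∀ k, ‖nuk k‖ ≤ ‖nustar‖ + R := by
    intro k; have := norm_sub_norm_le (nuk k) nustar; linarith [hnuR k]
  -- bound on the subgradients along the trajectory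
  obtain ⟨M0, hM0⟩ := hbdd (Metric.closedBall xstar R) Metric.isBounded_closedBall
  set M : ℝ := max M0 1 with hMdef
  clear_value M
  have hM1 : (1:ℝ) ≤ M := by rw [hMdef]; exact le_max_right _ _
  have hmem : ∀ k, xk k ∈ Metric.closedBall xstar R := by
    intro k; rw [Metric.mem_closedBall, dist_eq_norm]; exact hxR k
  have hg0M : ∀ k, ‖g0 (xk k)‖ ≤ M := by
    intro k; rw [hMdef]; exact le_trans (hM0 _ (hmem k)).1 (le_max_left _ _)
  have hgM : ∀ k i, ‖g i (xk k)‖ ≤ M := by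
    intro k i; rw [hMdef]; exact le_trans ((hM0 _ (hmem k)).2 i) (le_max_left _ _)
  -- bound on F along the trajectory
  have hFiR : ∀ k i, Fplus f (xk k) i ≤ M * R := by
    intro k i
    have h1 := hg i (xk k) xstar
    have hFstar : max (f i xstar) 0 = 0 := max_eq_right (hxfeas i)
    rw [hFstar] at h1
    have e1 : ⟪g i (xk k), xstar - xk k⟫ = ⟪g i (xk k), xstar⟫ - ⟪g i (xk k), xk k⟫ :=
      inner_sub_right _ _ _
    have e2 : ⟪g i (xk k), xk k - xstar⟫ = ⟪g i (xk k), xk k⟫ - ⟪g i (xk k), xstar⟫ :=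
      inner_sub_right _ _ _
    have h2 : ⟪g i (xk k), xk k - xstar⟫ ≤ ‖g i (xk k)‖ * ‖xk k - xstar‖ := real_inner_le_norm _ _
    have h3 : ‖g i (xk k)‖ * ‖xk k - xstar‖ ≤ M * R :=
      mul_le_mul (hgM k i) (hxR k) (norm_nonneg _) (by linarith)
    rw [Fplus_apply]
    linarith
  set Bf : ℝ := Real.sqrt m * (M * R) with hBfdef
  clear_value Bf
  have hMR0 : 0 ≤ M * R := mul_nonneg (by linarith) hR0
  have hBf0 : 0 ≤ Bf := by rw [hBfdef]; exact mul_nonneg (Real.sqrt_nonneg _) hMR0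
  have hFb : ∀ k, ‖Fplus f (xk k)‖ ≤ Bf := by
    intro k
    rw [hBfdef]
    apply euclid_norm_le_of_coord _ _ hMR0
    intro i
    rw [abs_of_nonneg (Fplus_nonneg f _ i)]
    exact hFiR k i
  -- bound on the residual along the trajectory
  obtain ⟨CA, hCA0, hCA⟩ := exists_matrix_bound A
  set Br : ℝ := CA * (‖xstar‖ + R) + ‖b‖ with hBrdef
  clear_value Br
  have hBr0 : 0 ≤ Br := by
    rw [hBrdef]
    exact add_nonneg (mul_nonneg hCA0 (add_nonneg (norm_nonneg _) hR0)) (norm_nonneg _)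
  have hrb : ∀ k, ‖mulVecE A (xk k) - b‖ ≤ Br := by
    intro k
    calc ‖mulVecE A (xk k) - b‖ ≤ ‖mulVecE A (xk k)‖ + ‖b‖ := norm_sub_le _ _
      _ ≤ CA * ‖xk k‖ + ‖b‖ := by linarith [hCA (xk k)]
      _ ≤ Br := by
          simp only [hBrdef]
          have h1 := hxnorm k
          nlinarith [norm_nonneg (xk k)]
  -- bounds on the penalty vectors
  have hpowb : ∀ t c : ℝ, 0 ≤ t → t ≤ c → t ^ (s-1) ≤ max 1 c := by
    intro t c ht hc
    calc t ^ (s-1) ≤ (max 1 c) ^ (s-1) :=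
          Real.rpow_le_rpow ht (le_trans hc (le_max_right _ _)) (by linarith)
      _ ≤ (max 1 c) ^ (1:ℝ) :=
          Real.rpow_le_rpow_of_exponent_le (le_max_left _ _) (by linarith)
      _ = max 1 c := Real.rpow_one _
  have hmax1 : ∀ c : ℝ, (0:ℝ) ≤ max 1 c := fun c => le_trans zero_le_one (le_max_left _ _)
  have hϱb : ∀ k, ‖ϱ k‖ ≤ s * max 1 Bf := by
    intro k; rw [hϱ k]; split_ifs with h
    · rw [norm_smul, Real.norm_eq_abs,
        abs_of_nonneg (mul_nonneg hs0.le (Real.rpow_nonneg (norm_nonneg _) _))]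
      have hn : (0:ℝ) < ‖Fplus f (xk k)‖ := norm_pos_iff.mpr h
      have h1 : ‖Fplus f (xk k)‖ ^ (s-2) * ‖Fplus f (xk k)‖ = ‖Fplus f (xk k)‖ ^ (s-1) := by
        have h2 : ‖Fplus f (xk k)‖ ^ (s-2) * ‖Fplus f (xk k)‖ ^ (1:ℝ)
            = ‖Fplus f (xk k)‖ ^ (s-1) := by
          rw [← Real.rpow_add hn]; congr 1; ring
        rw [Real.rpow_one] at h2; exact h2
      rw [mul_assoc, h1]
      exact mul_le_mul_of_nonneg_left (hpowb _ _ (norm_nonneg _) (hFb k)) hs0.le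
    · simp only [norm_zero]
      exact mul_nonneg hs0.le (hmax1 _)
  have hςb : ∀ k, ‖ς k‖ ≤ s * max 1 Br := by
    intro k; rw [hς k]; split_ifs with h
    · rw [norm_smul, Real.norm_eq_abs,
        abs_of_nonneg (mul_nonneg hs0.le (Real.rpow_nonneg (norm_nonneg _) _))]
      have hn : (0:ℝ) < ‖mulVecE A (xk k) - b‖ := norm_pos_iff.mpr (sub_ne_zero.mpr h)
      have h1 : ‖mulVecE A (xk k) - b‖ ^ (s-2) * ‖mulVecE A (xk k) - b‖
          = ‖mulVecE A (xk k) - b‖ ^ (s-1) := by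
        have h2 : ‖mulVecE A (xk k) - b‖ ^ (s-2) * ‖mulVecE A (xk k) - b‖ ^ (1:ℝ)
            = ‖mulVecE A (xk k) - b‖ ^ (s-1) := by
          rw [← Real.rpow_add hn]; congr 1; ring
        rw [Real.rpow_one] at h2; exact h2
      rw [mul_assoc, h1]
      exact mul_le_mul_of_nonneg_left (hpowb _ _ (norm_nonneg _) (hrb k)) hs0.le
    · simp only [norm_zero]
      exact mul_nonneg hs0.le (hmax1 _)
  -- bound on the primal direction
  obtain ⟨CT, hCT0, hCT⟩ := exists_matrix_bound Aᵀ
  set Bt : ℝ := M + (m * (((‖lamstar‖ + R) + ρ * (s * max 1 Bf)) * M))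
      + CT * ((‖nustar‖ + R) + ρ * (s * max 1 Br)) with hBtdef
  clear_value Bt
  have hTxb : ∀ k, ‖Tx k‖ ≤ Bt := by
    intro k
    rw [hTx k]
    have hcb0 : 0 ≤ (‖lamstar‖ + R) + ρ * (s * max 1 Bf) :=
      add_nonneg (add_nonneg (norm_nonneg _) hR0)
        (mul_nonneg hρ.le (mul_nonneg hs0.le (hmax1 _)))
    have h2 : ‖∑ i, (lamk k i + ρ * ϱ k i) • g i (xk k)‖
        ≤ m * (((‖lamstar‖ + R) + ρ * (s * max 1 Bf)) * M) := by
      calc ‖∑ i, (lamk k i + ρ * ϱ k i) • g i (xk k)‖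
          ≤ ∑ i, ‖(lamk k i + ρ * ϱ k i) • g i (xk k)‖ := norm_sum_le _ _
        _ ≤ ∑ _i : Fin m, ((‖lamstar‖ + R) + ρ * (s * max 1 Bf)) * M := by
            apply Finset.sum_le_sum
            intro i _
            rw [norm_smul, Real.norm_eq_abs,
              abs_of_nonneg (add_nonneg (hlamnn k i) (mul_nonneg hρ.le (hϱnn k i)))]
            have a1 : lamk k i ≤ ‖lamk k‖ := le_trans (le_abs_self _) (euclid_coord_le_norm _ i)
            have a2 : ϱ k i ≤ ‖ϱ k‖ := le_trans (le_abs_self _) (euclid_coord_le_norm _ i)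
            have hci : lamk k i + ρ * ϱ k i ≤ (‖lamstar‖ + R) + ρ * (s * max 1 Bf) := by
              have b1 := hlamnorm k
              have b2 := hϱb k
              nlinarith [hρ.le]
            exact mul_le_mul hci (hgM k i) (norm_nonneg _) hcb0
        _ = m * (((‖lamstar‖ + R) + ρ * (s * max 1 Bf)) * M) := by
            rw [Finset.sum_const, Finset.card_univ, Fintype.card_fin, nsmul_eq_mul]
    have h3 : ‖mulVecE Aᵀ (nuk k + ρ • ς k)‖ ≤ CT * ((‖nustar‖ + R) + ρ * (s * max 1 Br)) := by
      calc ‖mulVecE Aᵀ (nuk k + ρ • ς k)‖ ≤ CT * ‖nuk k + ρ • ς k‖ := hCT _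
        _ ≤ CT * ((‖nustar‖ + R) + ρ * (s * max 1 Br)) := by
            apply mul_le_mul_of_nonneg_left _ hCT0
            calc ‖nuk k + ρ • ς k‖ ≤ ‖nuk k‖ + ‖ρ • ς k‖ := norm_add_le _ _
              _ ≤ (‖nustar‖ + R) + ρ * (s * max 1 Br) := by
                  rw [norm_smul, Real.norm_eq_abs, abs_of_nonneg hρ.le]
                  have b1 := hnunorm k
                  have b2 := hςb k
                  nlinarith [hρ.le]
    calc ‖g0 (xk k) + (∑ i, (lamk k i + ρ * ϱ k i) • g i (xk k))
          + mulVecE Aᵀ (nuk k + ρ • ς k)‖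
        ≤ ‖g0 (xk k)‖ + ‖∑ i, (lamk k i + ρ * ϱ k i) • g i (xk k)‖
          + ‖mulVecE Aᵀ (nuk k + ρ • ς k)‖ := norm_add₃_le
      _ ≤ Bt := by simp only [hBtdef]; linarith [hg0M k]
  set MT : ℝ := Bt + Bf + Br + 1 with hMTdef
  clear_value MT
  have hBt0 : 0 ≤ Bt := le_trans (norm_nonneg (Tx 0)) (hTxb 0)
  have hMT1 : (1:ℝ) ≤ MT := by simp only [hMTdef]; linarith
  have hnTle : ∀ k, nT k ≤ MT := by
    intro k
    rw [hnT k]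
    have h1 : ‖Tx k‖ ^ 2 + ‖Fplus f (xk k)‖ ^ 2 + ‖mulVecE A (xk k) - b‖ ^ 2 ≤ MT ^ 2 := by
      simp only [hMTdef]
      nlinarith [hTxb k, hFb k, hrb k, norm_nonneg (Tx k), norm_nonneg (Fplus f (xk k)),
        norm_nonneg (mulVecE A (xk k) - b), hBt0, hBf0, hBr0]
    calc Real.sqrt (‖Tx k‖ ^ 2 + ‖Fplus f (xk k)‖ ^ 2 + ‖mulVecE A (xk k) - b‖ ^ 2)
        ≤ Real.sqrt (MT ^ 2) := Real.sqrt_le_sqrt h1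
      _ = MT := Real.sqrt_sq (by linarith)
  -- the summed bound
  set D : ℝ := MT * R2 / 2 with hDdef
  clear_value D
  have hDpos : 0 < D := by simp only [hDdef]; nlinarith
  have hsumb : ∀ K : ℕ, ∑ k ∈ Finset.range (K+1), γ k * e k ≤ D := by
    intro K
    have hterm : ∀ k, γ k * e k ≤ MT / 2 * ((V k - V (k+1)) + γ k ^ 2) := by
      intro k
      have h3 : γ k * e k = nT k * (α k * e k) := by
        rw [hα k]; field_simp [(hnT0 k).ne']
      have h4 : nT k * (α k * e k) ≤ MT * (α k * e k) :=
        mul_le_mul_of_nonneg_right (hnTle k) (mul_nonneg (hαpos k).le (hennn k))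
      have h5 : MT * (α k * e k) ≤ MT / 2 * ((V k - V (k+1)) + γ k ^ 2) := by
        have h7 : MT/2 * (2*(α k * e k)) ≤ MT/2 * ((V k - V (k+1)) + γ k ^ 2) :=
          mul_le_mul_of_nonneg_left (hrec2 k) (by linarith)
        calc MT * (α k * e k) = MT/2 * (2*(α k * e k)) := by ring
          _ ≤ _ := h7
      calc γ k * e k = nT k * (α k * e k) := h3
        _ ≤ MT * (α k * e k) := h4
        _ ≤ MT / 2 * ((V k - V (k+1)) + γ k ^ 2) := h5
    calc ∑ k ∈ Finset.range (K+1), γ k * e k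
        ≤ ∑ k ∈ Finset.range (K+1), MT / 2 * ((V k - V (k+1)) + γ k ^ 2) :=
          Finset.sum_le_sum (fun k _ => hterm k)
      _ = MT / 2 * ((V 0 - V (K+1)) + ∑ k ∈ Finset.range (K+1), γ k ^ 2) := by
          rw [← Finset.mul_sum, Finset.sum_add_distrib, Finset.sum_range_sub' V (K+1)]
      _ ≤ MT / 2 * R2 := by
          apply mul_le_mul_of_nonneg_left _ (by linarith)
          have := hVnn (K+1)
          have := hSpart (K+1)
          simp only [hR2def]
          linarith
      _ = D := by rw [hDdef]; ring
  -- lower bound on the sum of step lengths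
  have hγlow : ∀ K : ℕ, ((K:ℝ)+1) ^ (δ/2) ≤ ∑ k ∈ Finset.range (K+1), γ k := by
    intro K
    have hx : (0:ℝ) < (K:ℝ)+1 := by positivity
    have h1 : ∀ k ∈ Finset.range (K+1), ((K:ℝ)+1) ^ (-1+δ/2) ≤ γ k := by
      intro k hk
      rw [hγ k]
      apply Real.rpow_le_rpow_of_nonpos (by positivity) _ (by linarith)
      have h2 : (k:ℝ) ≤ K := by exact_mod_cast Nat.lt_succ_iff.mp (Finset.mem_range.mp hk)
      linarith
    have heq : ((K:ℝ)+1) * ((K:ℝ)+1) ^ (-1+δ/2) = ((K:ℝ)+1) ^ (δ/2) := by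
      have h3 : ((K:ℝ)+1) ^ (1:ℝ) * ((K:ℝ)+1) ^ (-1+δ/2) = ((K:ℝ)+1) ^ (δ/2) := by
        rw [← Real.rpow_add hx]; norm_num
      rw [Real.rpow_one] at h3; exact h3
    have h4 := Finset.card_nsmul_le_sum (Finset.range (K+1)) γ _ h1
    rw [Finset.card_range, nsmul_eq_mul] at h4
    push_cast at h4
    linarith [heq ▸ h4]
  -- choice of constants
  set cst : ℝ := ‖lamstar‖ + ‖nustar‖ with hcstdef
  clear_value cst
  have hcst0 : 0 ≤ cst := by rw [hcstdef]; exact add_nonneg (norm_nonneg _) (norm_nonneg _)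
  set t0 : ℝ := min (1/2) (min ρ (ρ / (16 * (1+cst)^2))) with ht0def
  clear_value t0
  have ht0pos : 0 < t0 := by
    simp only [ht0def]
    exact lt_min (by norm_num) (lt_min hρ (by positivity))
  have ht0half : t0 ≤ 1/2 := by rw [ht0def]; exact min_le_left _ _
  have ht0ρ : t0 ≤ ρ := by rw [ht0def]; exact le_trans (min_le_right _ _) (min_le_left _ _)
  have ht0ρ2 : t0 ≤ ρ / (16 * (1+cst)^2) := by
    rw [ht0def]; exact le_trans (min_le_right _ _) (min_le_right _ _)
  set C : ℝ := max 1 ((D/t0) ^ (2/δ)) with hCdef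
  clear_value C
  have hCpos : (0:ℝ) < C := by rw [hCdef]; exact lt_of_lt_of_le one_pos (le_max_left _ _)
  have hDt0 : (0:ℝ) < D / t0 := div_pos hDpos ht0pos
  have hC2 : D / t0 ≤ C ^ (δ/2) := by
    have h1 : (D/t0) ^ (2/δ) ≤ C := by rw [hCdef]; exact le_max_right _ _
    have h2 : ((D/t0) ^ (2/δ)) ^ (δ/2) ≤ C ^ (δ/2) :=
      Real.rpow_le_rpow (Real.rpow_nonneg hDt0.le _) h1 (by linarith)
    have h3 : ((D/t0) ^ (2/δ)) ^ (δ/2) = D/t0 := by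
      rw [← Real.rpow_mul hDt0.le, show (2/δ) * (δ/2) = 1 from by field_simp, Real.rpow_one]
    linarith [h3 ▸ h2]
  refine ⟨C, hCpos, ?_⟩
  intro ε hε0 hε1 K hK
  set P : ℝ := ((K:ℝ)+1) ^ (δ/2) with hPdef
  clear_value P
  have hPpos : 0 < P := by rw [hPdef]; exact Real.rpow_pos_of_pos (by positivity) _
  have hεs : (0:ℝ) < ε ^ s := Real.rpow_pos_of_pos hε0 _
  have hεns : (0:ℝ) < ε ^ (-s) := Real.rpow_pos_of_pos hε0 _
  have hPb : (D/t0) * ε ^ (-s) ≤ P := by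
    have h1 : C * ε ^ (-(2*s)/δ) ≤ (K:ℝ)+1 := le_trans hK (by linarith)
    have h2 : (C * ε ^ (-(2*s)/δ)) ^ (δ/2) ≤ P := by
      rw [hPdef]
      exact Real.rpow_le_rpow
        (mul_nonneg hCpos.le (Real.rpow_nonneg hε0.le _)) h1 (by linarith)
    have h3 : (C * ε ^ (-(2*s)/δ)) ^ (δ/2) = C ^ (δ/2) * ε ^ (-s) := by
      rw [Real.mul_rpow hCpos.le (Real.rpow_nonneg hε0.le _), ← Real.rpow_mul hε0.le,
        show (-(2*s)/δ) * (δ/2) = -s from by field_simp]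
    have h4 : (D/t0) * ε ^ (-s) ≤ C ^ (δ/2) * ε ^ (-s) :=
      mul_le_mul_of_nonneg_right hC2 hεns.le
    rw [h3] at h2
    linarith
  -- extract a good iterate
  have hη : ∃ k ≤ K, e k ≤ D / P := by
    by_contra hcon
    push_neg at hcon
    have h1 : ∀ k ∈ Finset.range (K+1), γ k * (D/P) < γ k * e k := by
      intro k hk
      exact mul_lt_mul_of_pos_left (hcon k (Nat.lt_succ_iff.mp (Finset.mem_range.mp hk)))
        (hγpos k)
    have h2 : ∑ k ∈ Finset.range (K+1), γ k * (D/P) < ∑ k ∈ Finset.range (K+1), γ k * e k :=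
      Finset.sum_lt_sum_of_nonempty (Finset.nonempty_range_add_one) h1
    have h3 : (∑ k ∈ Finset.range (K+1), γ k) * (D/P) = ∑ k ∈ Finset.range (K+1), γ k * (D/P) := by
      rw [Finset.sum_mul]
    have h5 : P * (D/P) = D := by field_simp [hPpos.ne']
    have h6 := mul_le_mul_of_nonneg_right (hγlow K) (div_nonneg hDpos.le hPpos.le)
    rw [← hPdef] at h6
    rw [h5] at h6
    have h7 := hsumb K
    linarith
  obtain ⟨k, hkK, hek⟩ := hη
  have hQ : 0 < (D/t0) * ε ^ (-s) := mul_pos hDt0 hεns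
  have hηb : D / P ≤ t0 * ε ^ s := by
    have h1 : D / P ≤ D / ((D/t0) * ε ^ (-s)) := by
      rw [div_le_div_iff₀ hPpos hQ]
      exact mul_le_mul_of_nonneg_left hPb hDpos.le
    have h2 : D / ((D/t0) * ε ^ (-s)) = t0 * ε ^ s := by
      rw [Real.rpow_neg hε0.le]
      field_simp [hDpos.ne', ht0pos.ne', hεs.ne']
    rw [h2] at h1
    exact h1
  have hekb : e k ≤ t0 * ε ^ s := le_trans hek hηb
  -- feasibility bounds
  have hFnns : 0 ≤ ‖Fplus f (xk k)‖ ^ s := Real.rpow_nonneg (norm_nonneg _) _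
  have hrnns : 0 ≤ ‖mulVecE A (xk k) - b‖ ^ s := Real.rpow_nonneg (norm_nonneg _) _
  have hsplit : ρ * (s * ‖Fplus f (xk k)‖ ^ s) + ρ * (s * ‖mulVecE A (xk k) - b‖ ^ s)
      ≤ t0 * ε ^ s := le_trans (hce k) hekb
  have hFs : ‖Fplus f (xk k)‖ ^ s ≤ (t0/ρ) * ε ^ s := by
    rw [div_mul_eq_mul_div, le_div_iff₀ hρ]
    linarith [hsplit, mul_nonneg (mul_nonneg (sub_nonneg.mpr hs1) hρ.le) hFnns,
      mul_nonneg (mul_nonneg hρ.le hs0.le) hrnns]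
  have hrs : ‖mulVecE A (xk k) - b‖ ^ s ≤ (t0/ρ) * ε ^ s := by
    rw [div_mul_eq_mul_div, le_div_iff₀ hρ]
    linarith [hsplit, mul_nonneg (mul_nonneg (sub_nonneg.mpr hs1) hρ.le) hrnns,
      mul_nonneg (mul_nonneg hρ.le hs0.le) hFnns]
  have htρnn : 0 ≤ t0/ρ := div_nonneg ht0pos.le hρ.le
  have hpow_eq : ∀ t : ℝ, 0 ≤ t → (t ^ s) ^ (1/s) = t := by
    intro t ht
    rw [← Real.rpow_mul ht, mul_one_div_cancel (ne_of_gt hs0), Real.rpow_one]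
  have hmulpow : ((t0/ρ) * ε ^ s) ^ (1/s) = (t0/ρ) ^ (1/s) * ε := by
    rw [Real.mul_rpow htρnn (Real.rpow_nonneg hε0.le _), hpow_eq ε hε0.le]
  have hFle : ‖Fplus f (xk k)‖ ≤ (t0/ρ) ^ (1/s) * ε := by
    have h1 : (‖Fplus f (xk k)‖ ^ s) ^ (1/s) ≤ ((t0/ρ) * ε ^ s) ^ (1/s) :=
      Real.rpow_le_rpow hFnns hFs (by positivity)
    rw [hpow_eq _ (norm_nonneg _), hmulpow] at h1
    exact h1
  have hrle : ‖mulVecE A (xk k) - b‖ ≤ (t0/ρ) ^ (1/s) * ε := by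
    have h1 : (‖mulVecE A (xk k) - b‖ ^ s) ^ (1/s) ≤ ((t0/ρ) * ε ^ s) ^ (1/s) :=
      Real.rpow_le_rpow hrnns hrs (by positivity)
    rw [hpow_eq _ (norm_nonneg _), hmulpow] at h1
    exact h1
  have hun : 0 ≤ (t0/ρ) ^ (1/s) := Real.rpow_nonneg htρnn _
  have hu : (t0/ρ) ^ (1/s) ≤ 1 / (4 * (1+cst)) := by
    have ha : 0 < t0/ρ := div_pos ht0pos hρ
    have hb : t0/ρ ≤ 1 := (div_le_one hρ).mpr ht0ρ
    have h1 : (t0/ρ) ^ (1/s) ≤ (t0/ρ) ^ ((1:ℝ)/2) := by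
      apply Real.rpow_le_rpow_of_exponent_ge ha hb
      have := one_div_le_one_div_of_le hs0 hs2
      linarith
    have h2 : (t0/ρ) ^ ((1:ℝ)/2) = Real.sqrt (t0/ρ) := (Real.sqrt_eq_rpow _).symm
    have h3 : t0/ρ ≤ 1/(16 * (1+cst)^2) := by
      rw [div_le_div_iff₀ hρ (by positivity)]
      have h9 : t0 * (16 * (1+cst)^2) ≤ ρ :=
        (le_div_iff₀ (by positivity : (0:ℝ) < 16 * (1+cst)^2)).mp ht0ρ2
      linarith
    have h4 : Real.sqrt (t0/ρ) ≤ Real.sqrt (1/(16*(1+cst)^2)) := Real.sqrt_le_sqrt h3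
    have h5 : Real.sqrt (1/(16*(1+cst)^2)) = 1/(4*(1+cst)) := by
      rw [show 1/(16*(1+cst)^2) = (1/(4*(1+cst)))^2 from by field_simp; ring]
      exact Real.sqrt_sq (by positivity)
    rw [h2] at h1
    rw [h5] at h4
    linarith
  have hufour : (t0/ρ) ^ (1/s) ≤ 1/4 := by
    have h1 : 1/(4*(1+cst)) ≤ 1/4 := by
      apply one_div_le_one_div_of_le (by norm_num)
      linarith [hcst0]
    linarith
  refine ⟨k, hkK, ?_, ?_⟩
  · -- feasibility
    have m4 : (t0/ρ) ^ (1/s) * ε ≤ 1/4 * ε := mul_le_mul_of_nonneg_right hufour hε0.le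
    linarith [hFle, hrle, m4, hε0.le]
  · -- objective value
    have hip1 : -(‖lamstar‖ * ‖Fplus f (xk k)‖) ≤ ⟪lamstar, Fplus f (xk k)⟫ := by
      have := abs_real_inner_le_norm lamstar (Fplus f (xk k))
      have := neg_abs_le ⟪lamstar, Fplus f (xk k)⟫
      linarith
    have hip2 : -(‖nustar‖ * ‖mulVecE A (xk k) - b‖) ≤ ⟪nustar, mulVecE A (xk k) - b⟫ := by
      have := abs_real_inner_le_norm nustar (mulVecE A (xk k) - b)
      have := neg_abs_le ⟪nustar, mulVecE A (xk k) - b⟫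
      linarith
    have hed : f0 (xk k) - pstar ≤ e k + ‖lamstar‖ * ‖Fplus f (xk k)‖
        + ‖nustar‖ * ‖mulVecE A (xk k) - b‖ := by
      have h := hrsnn k
      simp only [hedef]
      linarith
    have hεsle : ε ^ s ≤ ε := by
      have h1 : ε ^ s ≤ ε ^ (1:ℝ) := Real.rpow_le_rpow_of_exponent_ge hε0 hε1 hs1
      rw [Real.rpow_one] at h1
      exact h1
    have hcu : cst * ((t0/ρ) ^ (1/s)) ≤ 1/4 := by
      have hu' : (4*(1+cst)) * ((t0/ρ) ^ (1/s)) ≤ 1 :=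
        (le_div_iff₀' (by positivity : (0:ℝ) < 4*(1+cst))).mp hu
      linarith [hun, hu']
    have hlF : ‖lamstar‖ * ‖Fplus f (xk k)‖ ≤ ‖lamstar‖ * ((t0/ρ) ^ (1/s) * ε) :=
      mul_le_mul_of_nonneg_left hFle (norm_nonneg _)
    have hnr : ‖nustar‖ * ‖mulVecE A (xk k) - b‖ ≤ ‖nustar‖ * ((t0/ρ) ^ (1/s) * ε) :=
      mul_le_mul_of_nonneg_left hrle (norm_nonneg _)
    have hcst_mul : ‖lamstar‖ * ((t0/ρ) ^ (1/s) * ε) + ‖nustar‖ * ((t0/ρ) ^ (1/s) * ε)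
        = cst * ((t0/ρ) ^ (1/s)) * ε := by
      simp only [hcstdef]; ring
    have m1 : t0 * ε ^ s ≤ t0 * ε := mul_le_mul_of_nonneg_left hεsle ht0pos.le
    have m2 : t0 * ε ≤ 1/2 * ε := mul_le_mul_of_nonneg_right ht0half hε0.le
    have m3 : cst * ((t0/ρ) ^ (1/s)) * ε ≤ 1/4 * ε := mul_le_mul_of_nonneg_right hcu hε0.le
    linarith [hekb, hed, hlF, hnr, hcst_mul, hε0.le, m1, m2, m3]
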